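/- Let l ≥ 1, let L be a subgroup of ℤ^l, and let w ∈ ℝ^l have all coordinates positive and lie in the ℝ-linear span of (the image in ℝ^l of) L. Then for every δ > 0 there exist r ∈ ℕ, positive integers D_1, …, D_r, and elements v_1, …, v_r ∈ L such that: (i) |D_k·w_i − (v_k)_i| < δ for all 1 ≤ k ≤ r and 1 ≤ i ≤ l; (ii) the vectors v_1, …, v_r are linearly independent over ℝ; (iii) w is a nonnegative real linear combination of v_1, …, v_r, i.e. w lies in the simplicial cone ℝ_{≥0}·v_1 + … + ℝ_{≥0}·v_r. -/

import Mathlib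

open Finset

/-- coordinatewise cast `ℤ → ℝ` as an `AddMonoidHom`. -/
def iotaH (l : ℕ) : (Fin l → ℤ) →+ (Fin l → ℝ) where
  toFun := fun v => fun i => (v i : ℝ)
  map_zero' := by funext i; simp
  map_add' := by intro x y; funext i; push_cast; simp

lemma dirichlet_base {l : ℕ} (L : AddSubgroup (Fin l → ℤ)) (w : Fin l → ℝ)
    (hw : w ∈ Submodule.span ℝ
      ((fun v : Fin l → ℤ => fun i => (v i : ℝ)) '' (L : Set (Fin l → ℤ)))) :
    ∀ ε : ℝ, 0 < ε → ∃ D : ℕ, 1 ≤ D ∧ ∃ v ∈ L, ‖(D : ℝ) • w - iotaH l v‖ < ε := by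
  intro ε hε
  obtain ⟨m, a, g, hsum⟩ := Submodule.mem_span_set'.mp hw
  have hgmem : ∀ j, ∃ u : Fin l → ℤ, u ∈ L ∧ iotaH l u = (g j : Fin l → ℝ) := by
    intro j
    obtain ⟨u, hu, huv⟩ := (g j).2
    exact ⟨u, hu, by ext i; exact congrFun huv i⟩
  choose u humem hueq using hgmem
  set B : ℝ := ∑ j, ‖(g j : Fin l → ℝ)‖ with hB
  have hBnn : 0 ≤ B := Finset.sum_nonneg fun j _ => norm_nonneg _
  obtain ⟨K₀, hK₀⟩ := exists_nat_gt (B / ε)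
  set K := K₀ + 1 with hKdef
  have hKpos : (0 : ℝ) < K := by positivity
  have hBK : B / K < ε := by
    rw [div_lt_iff₀ hKpos]
    have h1 : B / ε < K := lt_of_lt_of_le hK₀ (by exact_mod_cast Nat.le_succ K₀)
    calc B = (B / ε) * ε := by field_simp
    _ < (K : ℝ) * ε := by exact mul_lt_mul_of_pos_right h1 hε
    _ = ε * K := by ring
  -- pigeonhole
  set F : ℕ → (Fin m → ℕ) := fun n => fun j => (⌊(K : ℝ) * Int.fract ((n : ℝ) * a j)⌋).toNat
    with hF
  have hmaps : ∀ n ∈ Finset.range (K ^ m + 1), F n ∈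
      Fintype.piFinset (fun _ : Fin m => Finset.range K) := by
    intro n _
    rw [Fintype.mem_piFinset]
    intro j
    rw [Finset.mem_range]
    have h0 : (0:ℝ) ≤ (K : ℝ) * Int.fract ((n : ℝ) * a j) :=
      mul_nonneg hKpos.le (Int.fract_nonneg _)
    have h1 : (K : ℝ) * Int.fract ((n : ℝ) * a j) < K := by
      nth_rewrite 2 [← mul_one (K:ℝ)]
      exact mul_lt_mul_of_pos_left (Int.fract_lt_one _) hKpos
    have : ⌊(K : ℝ) * Int.fract ((n : ℝ) * a j)⌋ < (K : ℤ) := by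
      exact Int.floor_lt.mpr (by exact_mod_cast h1)
    simp only [hF]
    omega
  have hcard : (Fintype.piFinset (fun _ : Fin m => Finset.range K)).card
      < (Finset.range (K ^ m + 1)).card := by
    rw [Fintype.card_piFinset]
    simp [Finset.card_range]
  obtain ⟨p, hp, q, hq, hne, hfe⟩ :=
    Finset.exists_ne_map_eq_of_card_lt_of_maps_to hcard hmaps
  have key : ∀ p q : ℕ, p < q → F p = F q →
      ∃ D : ℕ, 1 ≤ D ∧ ∃ v ∈ L, ‖(D : ℝ) • w - iotaH l v‖ < ε := by
    intro p q hpq hFeq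
    refine ⟨q - p, by omega, ?_⟩
    set z : Fin m → ℤ := fun j => ⌊(q : ℝ) * a j⌋ - ⌊(p : ℝ) * a j⌋ with hz
    refine ⟨∑ j, z j • u j, AddSubgroup.sum_mem L (fun j _ => AddSubgroup.zsmul_mem L (humem j) _), ?_⟩
    have hclose : ∀ j, |((q - p : ℕ) : ℝ) * a j - z j| < 1 / K := by
      intro j
      have hfl : ⌊(K : ℝ) * Int.fract ((p : ℝ) * a j)⌋ = ⌊(K : ℝ) * Int.fract ((q : ℝ) * a j)⌋ := by
        have h1 := congrFun hFeq j
        simp only [hF] at h1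
        have h2 : (0:ℤ) ≤ ⌊(K : ℝ) * Int.fract ((p : ℝ) * a j)⌋ :=
          Int.floor_nonneg.mpr (mul_nonneg hKpos.le (Int.fract_nonneg _))
        have h3 : (0:ℤ) ≤ ⌊(K : ℝ) * Int.fract ((q : ℝ) * a j)⌋ :=
          Int.floor_nonneg.mpr (mul_nonneg hKpos.le (Int.fract_nonneg _))
        omega
      have habs : |(K:ℝ) * Int.fract ((q : ℝ) * a j) - (K:ℝ) * Int.fract ((p : ℝ) * a j)| < 1 :=
        Int.abs_sub_lt_one_of_floor_eq_floor hfl.symm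
      have hexpand : ((q - p : ℕ) : ℝ) * a j - z j
          = Int.fract ((q : ℝ) * a j) - Int.fract ((p : ℝ) * a j) := by
        rw [Nat.cast_sub hpq.le]
        simp only [hz, Int.fract]
        push_cast
        ring
      rw [hexpand, lt_div_iff₀ hKpos]
      calc |Int.fract ((q : ℝ) * a j) - Int.fract ((p : ℝ) * a j)| * K
          = |(Int.fract ((q : ℝ) * a j) - Int.fract ((p : ℝ) * a j)) * K| := by
            rw [abs_mul, abs_of_pos hKpos]
        _ = |(K:ℝ) * Int.fract ((q : ℝ) * a j) - (K:ℝ) * Int.fract ((p : ℝ) * a j)| := by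
            ring_nf
        _ < 1 := habs
    -- now expand the norm
    have hiota : iotaH l (∑ j, z j • u j) = ∑ j, (z j : ℝ) • (g j : Fin l → ℝ) := by
      rw [map_sum]
      refine Finset.sum_congr rfl (fun j _ => ?_)
      rw [map_zsmul, ← hueq j, Int.cast_smul_eq_zsmul ℝ]
    have hrepr : ((q - p : ℕ) : ℝ) • w - iotaH l (∑ j, z j • u j)
        = ∑ j, (((q - p : ℕ) : ℝ) * a j - z j) • (g j : Fin l → ℝ) := by
      rw [hiota, ← hsum, Finset.smul_sum, ← Finset.sum_sub_distrib]
      refine Finset.sum_congr rfl (fun j _ => ?_)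
      rw [smul_smul, sub_smul]
    rw [hrepr]
    calc ‖∑ j, (((q - p : ℕ) : ℝ) * a j - z j) • (g j : Fin l → ℝ)‖
        ≤ ∑ j, ‖(((q - p : ℕ) : ℝ) * a j - z j) • (g j : Fin l → ℝ)‖ := norm_sum_le _ _
      _ ≤ ∑ j, (1 / K) * ‖(g j : Fin l → ℝ)‖ := by
          refine Finset.sum_le_sum (fun j _ => ?_)
          rw [norm_smul, Real.norm_eq_abs]
          exact mul_le_mul_of_nonneg_right (hclose j).le (norm_nonneg _)
      _ = B / K := by rw [← Finset.mul_sum, ← hB]; ring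
      _ < ε := hBK
  rcases hne.lt_or_gt with h | h
  · exact key p q h hfe
  · exact key q p h hfe.symm


lemma dirichlet {l : ℕ} (L : AddSubgroup (Fin l → ℤ)) (w : Fin l → ℝ)
    (hw : w ∈ Submodule.span ℝ
      ((fun v : Fin l → ℤ => fun i => (v i : ℝ)) '' (L : Set (Fin l → ℤ)))) :
    ∀ ε : ℝ, 0 < ε → ∀ N : ℕ, ∃ D : ℕ, N ≤ D ∧ 1 ≤ D ∧
      ∃ v ∈ L, ‖(D : ℝ) • w - iotaH l v‖ < ε := by
  intro ε hε N
  have hN1 : (0:ℝ) < (N:ℝ) + 1 := by positivity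
  obtain ⟨D₁, hD₁, v₁, hv₁, hnorm⟩ := dirichlet_base L w hw (ε / ((N:ℝ) + 1))
    (by positivity)
  refine ⟨(N + 1) * D₁,
    le_trans (Nat.le_succ N) (Nat.le_mul_of_pos_right _ hD₁),
    Nat.mul_pos (Nat.succ_pos N) hD₁, (N + 1) • v₁,
    AddSubgroup.nsmul_mem L hv₁ _, ?_⟩
  have : ((((N:ℕ) + 1) * D₁ : ℕ) : ℝ) • w - iotaH l ((N + 1) • v₁)
      = ((N:ℝ) + 1) • ((D₁ : ℝ) • w - iotaH l v₁) := by
    rw [map_nsmul, smul_sub]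
    congr 1
    · rw [smul_smul]
      congr 1
      push_cast
      ring
    · rw [← Nat.cast_smul_eq_nsmul ℝ]
      congr 1
      push_cast
      ring
  rw [this, norm_smul, Real.norm_eq_abs, abs_of_pos hN1]
  calc ((N:ℝ) + 1) * ‖(D₁ : ℝ) • w - iotaH l v₁‖ < ((N:ℝ) + 1) * (ε / ((N:ℝ) + 1)) :=
        mul_lt_mul_of_pos_left hnorm hN1
    _ = ε := by field_simp

section LemA
open Pointwise

variable {X : Type*} [NormedAddCommGroup X] [NormedSpace ℝ X] [FiniteDimensional ℝ X]

/-- the convex cone of finite nonnegative combinations of elements of `S`. -/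
def coneOf (S : Set X) : Set X :=
  {x | ∃ (n : ℕ) (c : Fin n → ℝ) (e : Fin n → X),
    (∀ k, 0 ≤ c k) ∧ (∀ k, e k ∈ S) ∧ x = ∑ k, c k • e k}

lemma coneOf_mem_of_fintype (S : Set X) (ι : Type*) [Fintype ι] (c : ι → ℝ) (e : ι → X)
    (h0 : ∀ k, 0 ≤ c k) (hS : ∀ k, e k ∈ S) : (∑ k, c k • e k) ∈ coneOf S := by
  classical
  let σ := Fintype.equivFin ι
  refine ⟨Fintype.card ι, fun k => c (σ.symm k), fun k => e (σ.symm k),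
    fun k => h0 _, fun k => hS _, ?_⟩
  rw [← Equiv.sum_comp σ.symm (fun i => c i • e i)]

lemma coneOf_zero_mem (S : Set X) : (0 : X) ∈ coneOf S :=
  ⟨0, Fin.elim0, Fin.elim0, fun k => k.elim0, fun k => k.elim0, by simp⟩

lemma coneOf_add (S : Set X) {x y : X} (hx : x ∈ coneOf S) (hy : y ∈ coneOf S) :
    x + y ∈ coneOf S := by
  obtain ⟨n₁, c₁, e₁, h01, hS1, rfl⟩ := hx
  obtain ⟨n₂, c₂, e₂, h02, hS2, rfl⟩ := hy
  have := coneOf_mem_of_fintype S (Fin n₁ ⊕ Fin n₂) (Sum.elim c₁ c₂) (Sum.elim e₁ e₂)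
    (fun k => by cases k with | inl k => simpa using h01 k | inr k => simpa using h02 k)
    (fun k => by cases k with | inl k => simpa using hS1 k | inr k => simpa using hS2 k)
  rwa [Fintype.sum_sum_type] at this

lemma coneOf_smul (S : Set X) {t : ℝ} (ht : 0 ≤ t) {x : X} (hx : x ∈ coneOf S) :
    t • x ∈ coneOf S := by
  obtain ⟨n, c, e, h0, hS, rfl⟩ := hx
  refine ⟨n, fun k => t * c k, e, fun k => mul_nonneg ht (h0 k), hS, ?_⟩
  rw [Finset.smul_sum]
  exact Finset.sum_congr rfl fun k _ => (smul_smul t (c k) (e k))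

lemma coneOf_convex (S : Set X) : Convex ℝ (coneOf S) := by
  intro x hx y hy a b ha hb _
  exact coneOf_add S (coneOf_smul S ha hx) (coneOf_smul S hb hy)

lemma lemA (S : Set X) (hspan : Submodule.span ℝ S = ⊤)
    (hneg : ∀ s ∈ S, ∀ σ : ℝ, 0 < σ → ∃ s' ∈ S, ‖s + s'‖ < σ) :
    ∀ x : X, x ∈ coneOf S := by
  classical
  -- a basis of X made of elements of S
  obtain ⟨b, hbS, hbspan, hbli⟩ := exists_linearIndependent ℝ S
  rw [hspan] at hbspan
  let β : Module.Basis b ℝ X := Module.Basis.mk hbli (by rw [Subtype.range_coe, hbspan])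
  haveI : Fintype b := FiniteDimensional.fintypeBasisIndex β
  -- the open set of strictly positive combinations
  set U : Set X := {x | ∀ j : b, 0 < β.repr x j} with hU
  have hUopen : IsOpen U := by
    have : U = ⋂ j : b, (fun x => β.repr x j) ⁻¹' (Set.Ioi (0:ℝ)) := by
      ext x; simp [hU]
    rw [this]
    refine isOpen_iInter_of_finite fun j => ?_
    have hcont : Continuous (fun x => β.repr x j) := by
      have : (fun x => β.repr x j) = (Finsupp.lapply j ∘ₗ β.repr.toLinearMap : X →ₗ[ℝ] ℝ) := rfl
      rw [this]
      exact LinearMap.continuous_of_finiteDimensional _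
    exact hcont.isOpen_preimage _ isOpen_Ioi
  have hUC : U ⊆ coneOf S := by
    intro x hx
    have hxsum : x = ∑ j : b, β.repr x j • β j := (β.sum_repr x).symm
    rw [hxsum]
    refine coneOf_mem_of_fintype S b _ _ (fun j => (hx j).le) (fun j => ?_)
    have : β j = (j : X) := by simp [β]
    rw [this]; exact hbS j.2
  have hUne : U.Nonempty := by
    refine ⟨∑ j : b, β j, fun j => ?_⟩
    have : β.repr (∑ j' : b, β j') j = ∑ j' : b, β.repr (β j') j := by
      rw [map_sum, Finsupp.coe_finset_sum, Finset.sum_apply]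
    rw [this]
    have : ∀ j' : b, β.repr (β j') j = if j' = j then 1 else 0 := by
      intro j'; rw [β.repr_self]; exact Finsupp.single_apply
    rw [Finset.sum_congr rfl (fun j' _ => this j')]
    simp
  -- interior of the cone is nonempty
  have hIntNe : (interior (coneOf S)).Nonempty :=
    hUne.mono (interior_maximal hUC hUopen)
  -- every point is in the interior of the cone
  intro x
  by_contra hxC
  have hxInt : x ∉ interior (coneOf S) := fun h => hxC (interior_subset h)
  obtain ⟨f, hf⟩ := geometric_hahn_banach_open_point
    ((coneOf_convex S).interior) isOpen_interior hxInt
  -- f is nonpositive on the interior of the cone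
  have hfint : ∀ y ∈ interior (coneOf S), f y ≤ 0 := by
    intro y hy
    by_contra hfy
    push_neg at hfy
    have ht : 0 < (|f x| + 1) / f y := by positivity
    have hty : ((|f x| + 1) / f y) • y ∈ interior (coneOf S) := by
      have hopen : IsOpen (((|f x| + 1) / f y) • interior (coneOf S)) :=
        isOpenMap_smul₀ (ne_of_gt ht) _ isOpen_interior
      have hsub : ((|f x| + 1) / f y) • interior (coneOf S) ⊆ coneOf S := by
        intro z hz
        obtain ⟨z', hz', rfl⟩ := hz
        exact coneOf_smul S ht.le (interior_subset hz')
      exact interior_maximal hsub hopen ⟨y, hy, rfl⟩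
    have := hf _ hty
    rw [map_smul, smul_eq_mul, div_mul_cancel₀ _ (ne_of_gt hfy)] at this
    have : |f x| < f x := by linarith
    exact absurd this (not_lt.mpr (le_abs_self _))
  -- hence nonpositive on the cone itself
  have hfC : ∀ y ∈ coneOf S, f y ≤ 0 := by
    intro y hy
    obtain ⟨u0, hu0⟩ := hIntNe
    by_contra hfy
    push_neg at hfy
    -- combo θ u0 + (1-θ) y ∈ interior for θ ∈ (0,1]
    have hcombo : ∀ θ : ℝ, 0 < θ → θ ≤ 1 →
        f (θ • u0 + (1 - θ) • y) ≤ 0 := by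
      intro θ hθ hθ1
      exact hfint _ ((coneOf_convex S).combo_interior_self_mem_interior hu0 hy hθ
        (by linarith) (by ring))
    set θ := min 1 (f y / (|f u0| + |f y| + 1)) with hθdef
    have hθpos : 0 < θ := lt_min one_pos (by positivity)
    have hθ1 : θ ≤ 1 := min_le_left _ _
    have := hcombo θ hθpos hθ1
    rw [map_add, map_smul, map_smul, smul_eq_mul, smul_eq_mul] at this
    -- θ * f u0 + (1 - θ) * f y ≤ 0
    have hb1 : θ * f u0 ≥ -(θ * |f u0|) := by
      have := neg_abs_le (f u0)
      nlinarith
    have hb2 : θ ≤ f y / (|f u0| + |f y| + 1) := min_le_right _ _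
    have hpos' : (0:ℝ) < |f u0| + |f y| + 1 := by positivity
    have hb3 : θ * (|f u0| + |f y| + 1) ≤ f y := by
      rw [← le_div_iff₀ hpos']; exact hb2
    nlinarith [abs_nonneg (f u0), abs_nonneg (f y), le_abs_self (f y)]
  -- f vanishes on S
  have hfS : ∀ s ∈ S, f s = 0 := by
    intro s hs
    have hle : f s ≤ 0 := hfC s (by
      have : s = ∑ k : Fin 1, (1:ℝ) • (fun _ => s) k := by simp
      exact ⟨1, fun _ => 1, fun _ => s, fun k => zero_le_one, fun k => hs, this⟩)
    have hge : 0 ≤ f s := by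
      by_contra hneg'
      push_neg at hneg'
      set σ := -f s / (‖f‖ + 1) with hσdef
      have hσpos : 0 < σ := by
        have : 0 < -f s := by linarith
        positivity
      obtain ⟨s', hs', hss'⟩ := hneg s hs σ hσpos
      have hfs' : f s' ≤ 0 := hfC s' (by
        have : s' = ∑ k : Fin 1, (1:ℝ) • (fun _ => s') k := by simp
        exact ⟨1, fun _ => 1, fun _ => s', fun k => zero_le_one, fun k => hs', this⟩)
      have hbound : |f (s + s')| ≤ ‖f‖ * σ := by
        calc |f (s + s')| ≤ ‖f‖ * ‖s + s'‖ := f.le_opNorm _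
          _ ≤ ‖f‖ * σ := mul_le_mul_of_nonneg_left hss'.le (norm_nonneg f)
      rw [map_add] at hbound
      have h1 : -(‖f‖ * σ) ≤ f s + f s' := neg_le_of_abs_le hbound
      have h2 : ‖f‖ * σ < (‖f‖ + 1) * σ := by nlinarith [norm_nonneg f]
      have h3 : (‖f‖ + 1) * σ = -f s := by
        rw [hσdef]; field_simp
      nlinarith
    linarith
  -- hence f = 0, contradiction
  have hf0 : (f : X →ₗ[ℝ] ℝ) = 0 := by
    have : Submodule.span ℝ S ≤ LinearMap.ker (f : X →ₗ[ℝ] ℝ) :=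
      Submodule.span_le.mpr (fun s hs => hfS s hs)
    rw [hspan, top_le_iff] at this
    exact LinearMap.ker_eq_top.mp this
  obtain ⟨u0, hu0⟩ := hIntNe
  have := hf u0 hu0
  have hz : ∀ y : X, f y = 0 := fun y => by
    have := LinearMap.congr_fun hf0 y; simpa using this
  rw [hz u0, hz x] at this
  exact lt_irrefl 0 this

end LemA

lemma carath {l : ℕ} (L : AddSubgroup (Fin l → ℤ)) (w : Fin l → ℝ) (δ : ℝ) :
    ∀ n : ℕ, ∀ u : Fin n → (Fin l → ℤ), ∀ c : Fin n → ℝ,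
      (∀ k, u k ∈ L) →
      (∀ k, ∃ D : ℕ, 1 ≤ D ∧ ∀ i, |(D : ℝ) * w i - (u k i : ℝ)| < δ) →
      (∀ k, 0 ≤ c k) → w = ∑ k, c k • (fun i : Fin l => (u k i : ℝ)) →
      ∃ (r : ℕ) (D : Fin r → ℕ) (v : Fin r → (Fin l → ℤ)),
        (∀ k, 0 < D k) ∧ (∀ k, v k ∈ L) ∧
        (∀ k i, |(D k : ℝ) * w i - (v k i : ℝ)| < δ) ∧
        LinearIndependent ℝ (fun k : Fin r => fun i : Fin l => (v k i : ℝ)) ∧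
        ∃ c : Fin r → ℝ, (∀ k, 0 ≤ c k) ∧
          w = ∑ k, c k • (fun i : Fin l => (v k i : ℝ)) := by
  intro n
  induction n using Nat.strong_induction_on with
  | _ n IH =>
    intro u c hL hD hc hwsum
    by_cases hli : LinearIndependent ℝ (fun k : Fin n => fun i : Fin l => (u k i : ℝ))
    · choose Dk hDk1 hDk2 using hD
      exact ⟨n, Dk, u, hDk1, hL, hDk2, hli, c, hc, hwsum⟩
    · obtain ⟨g₀, hg₀sum, k₁, hg₀k₁⟩ := Fintype.not_linearIndependent_iff.mp hli
      have hexists : ∃ g : Fin n → ℝ,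
          (∑ k, g k • (fun i : Fin l => (u k i : ℝ))) = 0 ∧ ∃ k, 0 < g k := by
        by_cases hpos : ∃ k, 0 < g₀ k
        · exact ⟨g₀, hg₀sum, hpos⟩
        · push_neg at hpos
          refine ⟨-g₀, ?_, k₁, ?_⟩
          · have : ∑ k, (-g₀) k • (fun i : Fin l => (u k i : ℝ))
                = -∑ k, g₀ k • (fun i : Fin l => (u k i : ℝ)) := by
              rw [← Finset.sum_neg_distrib]
              exact Finset.sum_congr rfl fun k _ => by simp [neg_smul]
            rw [this, hg₀sum, neg_zero]
          · have := hpos k₁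
            have : g₀ k₁ < 0 := lt_of_le_of_ne this hg₀k₁
            simpa using this
      obtain ⟨g, hgsum, hgpos⟩ := hexists
      have hn : n ≠ 0 := by rintro rfl; exact (hgpos.choose).elim0
      obtain ⟨m, rfl⟩ := Nat.exists_eq_succ_of_ne_zero hn
      set P : Finset (Fin (m + 1)) := Finset.univ.filter (fun k => 0 < g k) with hP
      have hPne : P.Nonempty := by
        obtain ⟨k, hk⟩ := hgpos
        exact ⟨k, by simp [hP, hk]⟩
      obtain ⟨k₀, hk₀P, hk₀min⟩ := Finset.exists_min_image P (fun k => c k / g k) hPne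
      have hgk₀ : 0 < g k₀ := by simpa [hP] using hk₀P
      set t := c k₀ / g k₀ with ht
      have ht0 : 0 ≤ t := div_nonneg (hc k₀) hgk₀.le
      set c' : Fin (m + 1) → ℝ := fun k => c k - t * g k with hc'def
      have hc' : ∀ k, 0 ≤ c' k := by
        intro k
        by_cases hgk : 0 < g k
        · have hmem : k ∈ P := by simp [hP, hgk]
          have := hk₀min k hmem
          have : t * g k ≤ c k := by
            rw [← le_div_iff₀ hgk]; exact this
          simp only [hc'def]; linarith
        · push_neg at hgk
          have : t * g k ≤ 0 := mul_nonpos_of_nonneg_of_nonpos ht0 hgk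
          have := hc k
          simp only [hc'def]; linarith
      have hck₀ : c' k₀ = 0 := by
        simp only [hc'def, ht]
        field_simp
        simp
      have hwsum' : w = ∑ k, c' k • (fun i : Fin l => (u k i : ℝ)) := by
        have : ∑ k, c' k • (fun i : Fin l => (u k i : ℝ))
            = ∑ k, c k • (fun i : Fin l => (u k i : ℝ))
              - t • ∑ k, g k • (fun i : Fin l => (u k i : ℝ)) := by
          rw [Finset.smul_sum, ← Finset.sum_sub_distrib]
          refine Finset.sum_congr rfl fun k _ => ?_
          simp only [hc'def]
          rw [sub_smul, smul_smul]
        rw [this, hgsum, smul_zero, sub_zero, ← hwsum]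
      refine IH m (Nat.lt_succ_self m) (fun k => u (k₀.succAbove k))
        (fun k => c' (k₀.succAbove k)) (fun k => hL _) (fun k => hD _)
        (fun k => hc' _) ?_
      rw [hwsum', Fin.sum_univ_succAbove
        (fun k => c' k • (fun i : Fin l => (u k i : ℝ))) k₀, hck₀, zero_smul, zero_add]

theorem stmt_2 (l : ℕ) (hl : 1 ≤ l) (L : AddSubgroup (Fin l → ℤ))
    (w : Fin l → ℝ) (hwpos : ∀ i, 0 < w i)
    (hw : w ∈ Submodule.span ℝ
      ((fun v : Fin l → ℤ => fun i => (v i : ℝ)) '' (L : Set (Fin l → ℤ)))) :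
    ∀ δ : ℝ, 0 < δ →
      ∃ (r : ℕ) (D : Fin r → ℕ) (v : Fin r → (Fin l → ℤ)),
        (∀ k, 0 < D k) ∧ (∀ k, v k ∈ L) ∧
        (∀ k i, |(D k : ℝ) * w i - (v k i : ℝ)| < δ) ∧
        LinearIndependent ℝ (fun k : Fin r => fun i : Fin l => (v k i : ℝ)) ∧
        ∃ c : Fin r → ℝ, (∀ k, 0 ≤ c k) ∧
          w = ∑ k, c k • (fun i : Fin l => (v k i : ℝ)) := by
  intro δ hδ
  classical
  -- the set of small errors
  set F : Set (Fin l → ℝ) :=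
    {x | ∃ D : ℕ, 1 ≤ D ∧ ∃ v ∈ L, x = (D : ℝ) • w - iotaH l v ∧ ‖x‖ < δ} with hF
  set E : Submodule ℝ (Fin l → ℝ) := Submodule.span ℝ F with hE
  have hFE : F ⊆ (E : Set (Fin l → ℝ)) := Submodule.subset_span
  set S : Set E := {s | (s : Fin l → ℝ) ∈ F} with hS
  have hcoeS : Subtype.val '' S = F := by
    ext x
    constructor
    · rintro ⟨s, hs, rfl⟩; exact hs
    · intro hx; exact ⟨⟨x, hFE hx⟩, hx, rfl⟩
  have hspanS : Submodule.span ℝ S = ⊤ := by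
    apply Submodule.map_injective_of_injective E.injective_subtype
    rw [Submodule.map_span, Submodule.map_subtype_top]
    show Submodule.span ℝ (Subtype.val '' S) = E
    rw [hcoeS]
  have hnegS : ∀ s ∈ S, ∀ σ : ℝ, 0 < σ → ∃ s' ∈ S, ‖s + s'‖ < σ := by
    rintro s hs σ hσ
    obtain ⟨D, hD1, v, hvL, hsval, hsnorm⟩ := hs
    set ρ := min σ (δ - ‖(s : Fin l → ℝ)‖) with hρdef
    have hρpos : 0 < ρ := lt_min hσ (by linarith)
    obtain ⟨D', hD'N, hD'1, v', hv'L, hnorm'⟩ := dirichlet L w hw ρ hρpos (D + 1)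
    have hDD' : D < D' := by omega
    set x' : Fin l → ℝ := ((D' - D : ℕ) : ℝ) • w - iotaH l (v' - v) with hx'
    have hx'eq : x' = ((D' : ℝ) • w - iotaH l v') - ((D : ℝ) • w - iotaH l v) := by
      rw [hx', map_sub, Nat.cast_sub hDD'.le, sub_smul]
      abel
    have hx'F : x' ∈ F := by
      refine ⟨D' - D, by omega, v' - v, sub_mem hv'L hvL, rfl, ?_⟩
      rw [hx'eq, ← hsval]
      calc ‖((D' : ℝ) • w - iotaH l v') - (s : Fin l → ℝ)‖
          ≤ ‖(D' : ℝ) • w - iotaH l v'‖ + ‖(s : Fin l → ℝ)‖ := norm_sub_le _ _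
        _ < ρ + ‖(s : Fin l → ℝ)‖ := by linarith
        _ ≤ δ := by
            have : ρ ≤ δ - ‖(s : Fin l → ℝ)‖ := min_le_right _ _
            linarith
    refine ⟨⟨x', hFE hx'F⟩, hx'F, ?_⟩
    have : ((s + ⟨x', hFE hx'F⟩ : E) : Fin l → ℝ) = (s : Fin l → ℝ) + x' := rfl
    rw [show ‖(s + (⟨x', hFE hx'F⟩ : E))‖ = ‖(s : Fin l → ℝ) + x'‖ from rfl]
    rw [hx'eq, ← hsval]
    have : (s : Fin l → ℝ) + (((D' : ℝ) • w - iotaH l v') - (s : Fin l → ℝ))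
        = (D' : ℝ) • w - iotaH l v' := by abel
    rw [this]
    exact lt_of_lt_of_le hnorm' (min_le_left _ _)
  -- a first good element
  obtain ⟨D₀, _, hD₀1, v₀, hv₀L, hnorm₀⟩ := dirichlet L w hw δ hδ 1
  set x₀ : Fin l → ℝ := (D₀ : ℝ) • w - iotaH l v₀ with hx₀
  have hx₀F : x₀ ∈ F := ⟨D₀, hD₀1, v₀, hv₀L, rfl, hnorm₀⟩
  set s₀ : E := ⟨x₀, hFE hx₀F⟩ with hs₀
  -- the cone of S is everything, in particular contains -s₀
  have hcone := lemA S hspanS hnegS (-s₀)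
  obtain ⟨n, c, e, hc0, heS, hsum⟩ := hcone
  -- extract the data
  choose Dk hDk1 vk hvkL hveq hvnorm using heS
  -- pass to the ambient space
  have hamb : x₀ + ∑ k, c k • ((e k : Fin l → ℝ)) = 0 := by
    have := congrArg (Subtype.val : E → (Fin l → ℝ)) hsum
    rw [show ((-s₀ : E) : Fin l → ℝ) = -x₀ from rfl] at this
    have hcoe : ((∑ k, c k • e k : E) : Fin l → ℝ) = ∑ k, c k • ((e k : Fin l → ℝ)) := by
      simp
    rw [hcoe] at this
    rw [← this]
    abel
  set T : ℝ := (D₀ : ℝ) + ∑ k, c k * (Dk k : ℝ) with hT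
  have hT1 : (1 : ℝ) ≤ T := by
    have hsum0 : 0 ≤ ∑ k, c k * (Dk k : ℝ) :=
      Finset.sum_nonneg fun k _ => mul_nonneg (hc0 k) (Nat.cast_nonneg _)
    have : (1:ℝ) ≤ (D₀ : ℝ) := by exact_mod_cast hD₀1
    linarith
  have hTpos : 0 < T := lt_of_lt_of_le one_pos hT1
  have hkey : T • w = iotaH l v₀ + ∑ k, c k • iotaH l (vk k) := by
    have hexp : ∀ k, c k • ((e k : Fin l → ℝ))
        = (c k * (Dk k : ℝ)) • w - c k • iotaH l (vk k) := by
      intro k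
      rw [hveq k, smul_sub, smul_smul]
    rw [Finset.sum_congr rfl (fun k _ => hexp k)] at hamb
    rw [hx₀] at hamb
    rw [hT, add_smul, Finset.sum_smul]
    have : ∑ k, (c k * (Dk k : ℝ)) • w - ∑ k, c k • iotaH l (vk k)
        = ∑ k, ((c k * (Dk k : ℝ)) • w - c k • iotaH l (vk k)) := by
      rw [Finset.sum_sub_distrib]
    have heq := hamb
    rw [Finset.sum_sub_distrib] at heq
    have : ((D₀ : ℝ) • w - iotaH l v₀)
        + (∑ k, (c k * (Dk k : ℝ)) • w - ∑ k, c k • iotaH l (vk k)) = 0 := by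
      rw [← Finset.sum_sub_distrib]; exact hamb
    have := congrArg (fun z => z + (iotaH l v₀ + ∑ k, c k • iotaH l (vk k))) this
    simp only [zero_add] at this
    rw [← this]
    abel
  have hwrepr : w = (1 / T) • iotaH l v₀ + ∑ k, (c k / T) • iotaH l (vk k) := by
    have : w = T⁻¹ • (T • w) := by
      rw [smul_smul, inv_mul_cancel₀ (ne_of_gt hTpos), one_smul]
    rw [this, hkey, smul_add, Finset.smul_sum, one_div]
    congr 1
    refine Finset.sum_congr rfl fun k _ => ?_
    rw [smul_smul, inv_mul_eq_div]
  -- assemble the Fin (n+1)-indexed family and apply Caratheodory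
  set U : Fin (n + 1) → (Fin l → ℤ) := Fin.cons v₀ vk with hU
  set C : Fin (n + 1) → ℝ := Fin.cons (1 / T) (fun k => c k / T) with hC
  have hUL : ∀ k, U k ∈ L := by
    intro k
    refine Fin.cases ?_ ?_ k
    · simpa [hU] using hv₀L
    · intro j; simpa [hU] using hvkL j
  have happrox : ∀ k, ∃ D : ℕ, 1 ≤ D ∧ ∀ i, |(D : ℝ) * w i - (U k i : ℝ)| < δ := by
    have key : ∀ (D : ℕ) (v : Fin l → ℤ), ‖(D : ℝ) • w - iotaH l v‖ < δ →
        ∀ i, |(D : ℝ) * w i - (v i : ℝ)| < δ := by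
      intro D v hnv i
      have h1 : |((D : ℝ) • w - iotaH l v) i| ≤ ‖(D : ℝ) • w - iotaH l v‖ := by
        have := norm_le_pi_norm ((D : ℝ) • w - iotaH l v) i
        simpa using this
      have h2 : ((D : ℝ) • w - iotaH l v) i = (D : ℝ) * w i - (v i : ℝ) := by
        simp [iotaH]
      rw [h2] at h1
      linarith
    intro k
    refine Fin.cases ?_ ?_ k
    · exact ⟨D₀, hD₀1, by simpa [hU] using key D₀ v₀ hnorm₀⟩
    · intro j
      exact ⟨Dk j, hDk1 j, by simpa [hU] using key (Dk j) (vk j) (hveq j ▸ hvnorm j)⟩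
  have hC0 : ∀ k, 0 ≤ C k := by
    intro k
    refine Fin.cases ?_ ?_ k
    · simp only [hC, Fin.cons_zero]
      positivity
    · intro j
      simp only [hC, Fin.cons_succ]
      exact div_nonneg (hc0 j) hTpos.le
  have hwsum : w = ∑ k, C k • (fun i : Fin l => (U k i : ℝ)) := by
    rw [Fin.sum_univ_succ]
    simp only [hC, hU, Fin.cons_zero, Fin.cons_succ]
    exact hwrepr
  exact carath L w δ (n + 1) U C hUL happrox hC0 hwsum
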